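/- Let (U, W, B) be a linear system over ℂ with U ≠ 0. The center of the Mackey Lie algebra gl^M_{U,W} is one-dimensional and equals ℂ · id_U: an element φ ∈ gl^M_{U,W} commutes with every element of gl^M_{U,W} if and only if φ is a scalar multiple of the identity of U. -/

import Mathlib

open TensorProduct

attribute [local instance 100] LieRing.ofAssociativeRing

variable {U W : Type*} [AddCommGroup U] [Module ℂ U] [AddCommGroup W] [Module ℂ W]

/-- The Mackey Lie algebra `gl^M_{U,W}`: all `φ ∈ End ℂ U` whose dual map preserves
`W̃ = range (B.flip) ⊆ U*`. -/
noncomputable def glMackey (B : U →ₗ[ℂ] W →ₗ[ℂ] ℂ) :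
    LieSubalgebra ℂ (Module.End ℂ U) where
  carrier := {φ | ∀ ξ ∈ LinearMap.range B.flip, φ.dualMap ξ ∈ LinearMap.range B.flip}
  add_mem' := by
    intro a b ha hb ξ hξ
    have h : (a + b).dualMap ξ = a.dualMap ξ + b.dualMap ξ := by ext x; simp
    rw [h]
    exact Submodule.add_mem _ (ha ξ hξ) (hb ξ hξ)
  zero_mem' := by
    intro ξ hξ
    have h : (0 : Module.End ℂ U).dualMap ξ = 0 := by ext x; simp
    rw [h]; exact Submodule.zero_mem _
  smul_mem' := by
    intro c a ha ξ hξ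
    have h : (c • a).dualMap ξ = c • a.dualMap ξ := by ext x; simp
    rw [h]
    exact Submodule.smul_mem _ _ (ha ξ hξ)
  lie_mem' := by
    intro a b ha hb ξ hξ
    have h : (⁅a, b⁆ : Module.End ℂ U).dualMap ξ
        = b.dualMap (a.dualMap ξ) - a.dualMap (b.dualMap ξ) := by
      ext x; simp [Module.End.lie_apply]
    rw [h]
    exact Submodule.sub_mem _ (hb _ (ha ξ hξ)) (ha _ (hb ξ hξ))

/-- For a linear system `(U, W, B)` with `U ≠ 0`, the center of the Mackey Lie algebra
`gl^M_{U,W}` is exactly `ℂ · id_U`: an element of `gl^M_{U,W}` commutes with every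
element of `gl^M_{U,W}` iff it is a scalar multiple of the identity. -/
theorem stmt_9 [Nontrivial U] (B : U →ₗ[ℂ] W →ₗ[ℂ] ℂ)
    (hB1 : ∀ u : U, (∀ w : W, B u w = 0) → u = 0)
    (hB2 : ∀ w : W, (∀ u : U, B u w = 0) → w = 0) :
    ∀ φ ∈ glMackey B,
      ((∀ ψ ∈ glMackey B, φ * ψ = ψ * φ) ↔
        ∃ c : ℂ, φ = c • (1 : Module.End ℂ U)) := by
  intro φ _hφ
  constructor
  · intro hcomm
    obtain ⟨u0, hu0⟩ := exists_ne (0 : U)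
    have hex : ¬ ∀ w, B u0 w = 0 := fun h => hu0 (hB1 u0 h)
    push_neg at hex
    obtain ⟨w0, hw0⟩ := hex
    refine ⟨B (φ u0) w0 / B u0 w0, ?_⟩
    ext v
    set ψ : Module.End ℂ U := (LinearMap.toSpanSingleton ℂ U v).comp (B.flip w0) with hψdef
    have hψ : ψ ∈ glMackey B := by
      intro ξ hξ
      refine ⟨ξ v • w0, ?_⟩
      ext u
      simp [hψdef, LinearMap.toSpanSingleton, mul_comm]
    have h := hcomm ψ hψ
    have h' := congrArg (fun f : Module.End ℂ U => f u0) h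
    have key : B u0 w0 • φ v = B (φ u0) w0 • v := by
      simpa [hψdef, LinearMap.toSpanSingleton, Module.End.mul_apply] using h'
    have : φ v = (B u0 w0)⁻¹ • (B (φ u0) w0 • v) := by
      rw [← key, inv_smul_smul₀ hw0]
    simpa [smul_smul, div_eq_inv_mul] using this
  · rintro ⟨c, rfl⟩ ψ _
    ext u
    simp
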